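/- arXiv:1204.0713 — 2 statements merged into one kernel-verified Lean document; each statement's English description precedes it below -/
import Mathlib

section
/- For all Laurent polynomials a, b, c ∈ ℂ[t,t⁻¹], the following super-bracket identity holds in the matrix realization of the Cheng–Kac superalgebra: {[e_{w₄−w₁}(a), [q_{w₁+w₄}, e_{w₃−w₄}(c)]], [q_{w₁+w₄}, e_{w₂−w₄}(b)]} = Vir(abc) − h_{w₁−w₄}(a·b'·c). Here the two inner brackets [q_{w₁+w₄}, e_{w₃−w₄}(c)] and [q_{w₁+w₄}, e_{w₂−w₄}(b)] are commutators, the bracket of e_{w₄−w₁}(a) with the (odd) element [q_{w₁+w₄}, e_{w₃−w₄}(c)] is a commutator, and the outermost bracket of the two resulting odd elements is an anticommutator. (This is Lemma 3.4 of the paper, with signs fixed by the stated conventions.) -/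
open LaurentPolynomial Matrix

noncomputable section

/-- `R = ℂ[t,t⁻¹]`, the algebra of complex Laurent polynomials. -/
abbrev R := LaurentPolynomial ℂ

/-- Differentiation on Laurent polynomials, as a `ℂ`-linear endomorphism:
`D (T n) = n • T (n-1)`, i.e. `D f = f'`. -/
noncomputable def Der : Module.End ℂ R :=
  (Finsupp.lsum ℂ fun n : ℤ =>
    LinearMap.toSpanSingleton ℂ R ((n : ℂ) • LaurentPolynomial.T (n - 1)) :
      (ℤ →₀ ℂ) →ₗ[ℂ] R) ∘ₗ (AddMonoidAlgebra.coeffLinearEquiv ℂ).toLinearMap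

/-- Multiplication by `a ∈ R` as a `ℂ`-linear endomorphism `m_a`. -/
noncomputable def mulE (a : R) : Module.End ℂ R := LinearMap.mulLeft ℂ a

/-- The ring of operators `E = End_ℂ(R)`. -/
abbrev E := Module.End ℂ R

/-- 8×8 matrices over `E`, written as 2×2 blocks of 4×4 matrices. -/
abbrev M8 := Matrix (Fin 4 ⊕ Fin 4) (Fin 4 ⊕ Fin 4) E

/-- `b_{ij} = e_{ij} - e_{ji}` (entries are the identity operator); indices 0-based. -/
noncomputable def bMat (i j : Fin 4) : Matrix (Fin 4) (Fin 4) E :=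
  Matrix.single i j 1 - Matrix.single j i 1

/-- `e_{w_i - w_j}(a) = [[e_{ij} m_a, 0],[0, -e_{ji} m_a]]`; indices 0-based. -/
noncomputable def eW (i j : Fin 4) (a : R) : M8 :=
  Matrix.fromBlocks (Matrix.single i j (mulE a)) 0 0
    (-(Matrix.single j i (mulE a)))

/-- `h_{w_i - w_j}(a) = [[(e_{ii}-e_{jj}) m_a, 0],[0, (e_{jj}-e_{ii}) m_a]]`; indices 0-based. -/
noncomputable def hW (i j : Fin 4) (a : R) : M8 :=
  Matrix.fromBlocks
    (Matrix.single i i (mulE a) - Matrix.single j j (mulE a)) 0 0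
    (Matrix.single j j (mulE a) - Matrix.single i i (mulE a))

/-- `φ` on the basis `b_{ij}` (`i < j`) of skew matrices (0-based indices):
`φ(b₁₂) = b₃₄`, `φ(b₁₃) = -b₂₄`, `φ(b₁₄) = b₂₃`, `φ(b₂₃) = b₁₄`, `φ(b₂₄) = -b₁₃`,
`φ(b₃₄) = b₁₂` (the involution `k = k' + k'' ↦ k' - k''`). -/
noncomputable def phiB (i j : Fin 4) : Matrix (Fin 4) (Fin 4) E :=
  if i = 0 ∧ j = 1 then bMat 2 3
  else if i = 0 ∧ j = 2 then -(bMat 1 3)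
  else if i = 0 ∧ j = 3 then bMat 1 2
  else if i = 1 ∧ j = 2 then bMat 0 3
  else if i = 1 ∧ j = 3 then -(bMat 0 2)
  else if i = 2 ∧ j = 3 then bMat 0 1
  else 0

/-- `q_{w_i + w_j} = [[0, b_{ij}],[φ(b_{ij})D, 0]]` for `i < j`; indices 0-based. -/
noncomputable def qP (i j : Fin 4) : M8 :=
  Matrix.fromBlocks 0 (bMat i j) (phiB i j * Matrix.scalar (Fin 4) Der) 0

/-- `q_{-w_i - w_j}(a) = [[0,0],[(e_{ij}+e_{ji}) m_a, 0]]`; indices 0-based. -/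
noncomputable def qM (i j : Fin 4) (a : R) : M8 :=
  Matrix.fromBlocks 0 0
    (Matrix.single i j (mulE a) + Matrix.single j i (mulE a)) 0

/-- `Vir(a) = [[I₄ m_a D + e₁₁ m_{a'}, 0],[0, I₄ m_a D + (I₄ - e₁₁) m_{a'}]]`. -/
noncomputable def Vir (a : R) : M8 :=
  Matrix.fromBlocks
    (Matrix.scalar (Fin 4) (mulE a * Der) + Matrix.single 0 0 (mulE (Der a))) 0 0
    (Matrix.scalar (Fin 4) (mulE a * Der) +
      (Matrix.scalar (Fin 4) (mulE (Der a)) - Matrix.single 0 0 (mulE (Der a))))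

lemma Der_single (n : ℤ) (r : ℂ) :
    Der (AddMonoidAlgebra.single n r) = r • ((n : ℂ) • LaurentPolynomial.T (n - 1)) := by
  show (Finsupp.lsum ℂ _) (Finsupp.single n r) = _
  rw [Finsupp.lsum_single, LinearMap.toSpanSingleton_apply]

lemma single_eq_smul_T (n : ℤ) (r : ℂ) :
    (AddMonoidAlgebra.single n r : R) = r • LaurentPolynomial.T n := by
  rw [LaurentPolynomial.T, AddMonoidAlgebra.smul_single, smul_eq_mul, mul_one]

lemma Der_T (n : ℤ) : Der (LaurentPolynomial.T n) = (n : ℂ) • LaurentPolynomial.T (n - 1) := by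
  rw [LaurentPolynomial.T, Der_single, one_smul]

lemma T_mul_T (n m : ℤ) :
    (LaurentPolynomial.T n : R) * LaurentPolynomial.T m = LaurentPolynomial.T (n + m) :=
  (LaurentPolynomial.T_add n m).symm

lemma Der_leibniz (x y : R) : Der (x * y) = Der x * y + x * Der y := by
  induction x using LaurentPolynomial.induction_on' with
  | add p q hp hq => simp only [add_mul, map_add, hp, hq]; ring
  | C_mul_T n r =>
    induction y using LaurentPolynomial.induction_on' with
    | add p q hp hq => simp only [mul_add, map_add, hp, hq]; ring
    | C_mul_T m s =>
      rw [← single_eq_C_mul_T, ← single_eq_C_mul_T, single_eq_smul_T, single_eq_smul_T,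
        smul_mul_smul_comm, T_mul_T, _root_.map_smul, _root_.map_smul, _root_.map_smul, Der_T, Der_T, Der_T]
      simp only [smul_mul_assoc, mul_smul_comm, T_mul_T, smul_smul]
      rw [show n - 1 + m = n + m - 1 by ring, show n + (m - 1) = n + m - 1 by ring,
        ← add_smul]
      congr 1
      push_cast
      ring

lemma mulE_add (x y : R) : mulE (x + y) = mulE x + mulE y := by
  ext f; simp [mulE, add_mul]

lemma mulE_mulE (x y : R) : mulE x * mulE y = mulE (x * y) := by
  ext f
  simp [mulE, Module.End.mul_apply, mul_assoc]

lemma Der_mulE (x : R) : Der * mulE x = mulE x * Der + mulE (Der x) := by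
  ext f
  simp [mulE, Der_leibniz, Module.End.mul_apply]
  ring

lemma Der_mulE_assoc (x : R) (y : E) :
    Der * (mulE x * y) = mulE x * (Der * y) + mulE (Der x) * y := by
  rw [← mul_assoc, Der_mulE, add_mul, mul_assoc]

lemma mulE_mulE_assoc (x y : R) (z : E) : mulE x * (mulE y * z) = mulE (x * y) * z := by
  rw [← mul_assoc, mulE_mulE]

lemma sbm_mul_scalar (i j : Fin 4) (x d : E) :
    Matrix.single i j x * Matrix.scalar (Fin 4) d = Matrix.single i j (x * d) := by
  refine Matrix.ext fun a b => ?_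
  simp [Matrix.scalar_apply, Matrix.mul_diagonal, Matrix.single, Matrix.of_apply,
    ite_mul, zero_mul]

lemma scalar_mul_sbm (i j : Fin 4) (x d : E) :
    Matrix.scalar (Fin 4) d * Matrix.single i j x = Matrix.single i j (d * x) := by
  refine Matrix.ext fun a b => ?_
  simp [Matrix.scalar_apply, Matrix.diagonal_mul, Matrix.single, Matrix.of_apply,
    mul_ite, mul_zero]

lemma scalar4 (x : E) : Matrix.scalar (Fin 4) x =
    Matrix.single 0 0 x + Matrix.single 1 1 x +
      Matrix.single 2 2 x + Matrix.single 3 3 x := by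
  refine Matrix.ext fun a b => ?_
  fin_cases a <;> fin_cases b <;>
    simp (config := { decide := true }) [Matrix.scalar_apply, Matrix.diagonal_apply,
      Matrix.add_apply]

lemma qP03 : qP 0 3 =
    Matrix.fromBlocks 0 (bMat 0 3) (bMat 1 2 * Matrix.scalar (Fin 4) Der) 0 := by
  rw [qP, phiB, if_neg (by decide), if_neg (by decide), if_pos (by decide)]

lemma lemX (c : R) : qP 0 3 * eW 2 3 c - eW 2 3 c * qP 0 3 =
    Matrix.fromBlocks 0
      (Matrix.single 2 0 (mulE c) - Matrix.single 0 2 (mulE c))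
      (Matrix.single 1 3 (Der * mulE c) - Matrix.single 3 1 (mulE c * Der)) 0 := by
  rw [qP03, eW, Matrix.fromBlocks_multiply, Matrix.fromBlocks_multiply]
  simp (config := { decide := true }) only [bMat, Matrix.sub_mul, Matrix.mul_sub, sub_mul,
    mul_sub, Matrix.mul_neg, Matrix.neg_mul, sbm_mul_scalar, scalar_mul_sbm,
    Matrix.single_mul_single_same, Matrix.single_mul_single_of_ne, Matrix.mul_zero,
    Matrix.zero_mul, Matrix.mul_one, one_mul, mul_one, add_zero, zero_add, sub_zero, zero_sub,
    neg_neg, neg_zero, ne_eq]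
  rw [sub_eq_add_neg, Matrix.fromBlocks_neg, Matrix.fromBlocks_add]
  congr 1 <;> abel

lemma lemZ (b : R) : qP 0 3 * eW 1 3 b - eW 1 3 b * qP 0 3 =
    Matrix.fromBlocks 0
      (Matrix.single 1 0 (mulE b) - Matrix.single 0 1 (mulE b))
      (Matrix.single 3 2 (mulE b * Der) - Matrix.single 2 3 (Der * mulE b)) 0 := by
  rw [qP03, eW, Matrix.fromBlocks_multiply, Matrix.fromBlocks_multiply]
  simp (config := { decide := true }) only [bMat, Matrix.sub_mul, Matrix.mul_sub, sub_mul,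
    mul_sub, Matrix.mul_neg, Matrix.neg_mul, sbm_mul_scalar, scalar_mul_sbm,
    Matrix.single_mul_single_same, Matrix.single_mul_single_of_ne, Matrix.mul_zero,
    Matrix.zero_mul, Matrix.mul_one, one_mul, mul_one, add_zero, zero_add, sub_zero, zero_sub,
    neg_neg, neg_zero, ne_eq]
  rw [sub_eq_add_neg, Matrix.fromBlocks_neg, Matrix.fromBlocks_add]
  congr 1 <;> abel

lemma lemY (a c : R) :
    eW 3 0 a *
        Matrix.fromBlocks 0
          (Matrix.single 2 0 (mulE c) - Matrix.single 0 2 (mulE c))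
          (Matrix.single 1 3 (Der * mulE c) - Matrix.single 3 1 (mulE c * Der)) 0
      - Matrix.fromBlocks 0
          (Matrix.single 2 0 (mulE c) - Matrix.single 0 2 (mulE c))
          (Matrix.single 1 3 (Der * mulE c) - Matrix.single 3 1 (mulE c * Der)) 0
        * eW 3 0 a
    = Matrix.fromBlocks 0
        (Matrix.single 2 3 (mulE c * mulE a) - Matrix.single 3 2 (mulE a * mulE c))
        (Matrix.single 0 1 (mulE a * (mulE c * Der))
          - Matrix.single 1 0 (Der * mulE c * mulE a)) 0 := by
  rw [eW, Matrix.fromBlocks_multiply, Matrix.fromBlocks_multiply]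
  simp (config := { decide := true }) only [Matrix.sub_mul, Matrix.mul_sub, sub_mul,
    mul_sub, Matrix.mul_neg, Matrix.neg_mul, mul_assoc,
    Matrix.single_mul_single_same, Matrix.single_mul_single_of_ne, Matrix.mul_zero,
    Matrix.zero_mul, Matrix.mul_one, one_mul, mul_one, add_zero, zero_add, sub_zero, zero_sub,
    neg_neg, neg_zero, ne_eq]
  rw [sub_eq_add_neg, Matrix.fromBlocks_neg, Matrix.fromBlocks_add]
  congr 1 <;> abel

lemma lemFinal (a b c : R) :
    Matrix.fromBlocks 0
        (Matrix.single 2 3 (mulE c * mulE a) - Matrix.single 3 2 (mulE a * mulE c))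
        (Matrix.single 0 1 (mulE a * (mulE c * Der))
          - Matrix.single 1 0 (Der * mulE c * mulE a)) 0 *
      Matrix.fromBlocks 0
        (Matrix.single 1 0 (mulE b) - Matrix.single 0 1 (mulE b))
        (Matrix.single 3 2 (mulE b * Der) - Matrix.single 2 3 (Der * mulE b)) 0
    + Matrix.fromBlocks 0
        (Matrix.single 1 0 (mulE b) - Matrix.single 0 1 (mulE b))
        (Matrix.single 3 2 (mulE b * Der) - Matrix.single 2 3 (Der * mulE b)) 0 *
      Matrix.fromBlocks 0
        (Matrix.single 2 3 (mulE c * mulE a) - Matrix.single 3 2 (mulE a * mulE c))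
        (Matrix.single 0 1 (mulE a * (mulE c * Der))
          - Matrix.single 1 0 (Der * mulE c * mulE a)) 0
    = Vir (a * b * c) - hW 0 3 (a * Der b * c) := by
  rw [Matrix.fromBlocks_multiply, Matrix.fromBlocks_multiply, Vir, hW]
  simp (config := { decide := true }) only [Matrix.sub_mul, Matrix.mul_sub, sub_mul,
    mul_sub, Matrix.mul_neg, Matrix.neg_mul,
    Matrix.single_mul_single_same, Matrix.single_mul_single_of_ne, Matrix.mul_zero,
    Matrix.zero_mul, Matrix.mul_one, one_mul, mul_one, add_zero, zero_add, sub_zero, zero_sub,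
    neg_neg, neg_zero, ne_eq, scalar4]
  conv_rhs => rw [sub_eq_add_neg]
  rw [Matrix.fromBlocks_neg, Matrix.fromBlocks_add, Matrix.fromBlocks_add]
  refine Matrix.fromBlocks_inj.mpr ⟨?_, ?_, ?_, ?_⟩ <;>
  · try simp only [mul_assoc, Der_mulE_assoc, Der_mulE, mul_add, add_mul, mulE_mulE_assoc,
      mulE_mulE, Der_leibniz, mulE_add, Matrix.single_add, mul_comm, mul_left_comm]
    abel

/-- Lemma 3.4:
`{[e_{w₄-w₁}(a), [q_{w₁+w₄}, e_{w₃-w₄}(c)]], [q_{w₁+w₄}, e_{w₂-w₄}(b)]}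
  = Vir(abc) - h_{w₁-w₄}(a·b'·c)` (indices 0-based below). -/
theorem stmt4 (a b c : R) :
    (eW 3 0 a * (qP 0 3 * eW 2 3 c - eW 2 3 c * qP 0 3)
        - (qP 0 3 * eW 2 3 c - eW 2 3 c * qP 0 3) * eW 3 0 a)
        * (qP 0 3 * eW 1 3 b - eW 1 3 b * qP 0 3)
      + (qP 0 3 * eW 1 3 b - eW 1 3 b * qP 0 3)
        * (eW 3 0 a * (qP 0 3 * eW 2 3 c - eW 2 3 c * qP 0 3)
            - (qP 0 3 * eW 2 3 c - eW 2 3 c * qP 0 3) * eW 3 0 a)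
      = Vir (a * b * c) - hW 0 3 (a * Der b * c) := by
  rw [lemX c, lemZ b, lemY a c, lemFinal a b c]

end
end

section
/- For all Laurent polynomials a, b ∈ ℂ[t,t⁻¹], the following identity holds: {q_{w₁+w₂}, [{q_{w₁+w₃}, q_{−w₁−w₂}(a)}, q_{−w₁−w₃}(b)]} = h_{w₁−w₂}(ab), where the innermost bracket {q_{w₁+w₃}, q_{−w₁−w₂}(a)} is an anticommutator of two odd elements, the middle bracket with q_{−w₁−w₃}(b) is a commutator, and the outermost bracket with q_{w₁+w₂} is an anticommutator. (This is the key structure computation in the proof of Lemma 3.3 of the paper.) -/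
open LaurentPolynomial Matrix

noncomputable section

set_option synthInstance.maxHeartbeats 1000000
set_option maxHeartbeats 1000000

lemma mulE_mul (a b : R) : mulE a * mulE b = mulE (a * b) := by
  ext x
  simp [mulE, mul_assoc]

open Matrix in
lemma B1 (u : E) : bMat 0 2 * (single 0 1 u + single 1 0 u) =
    -(single 2 1 u) := by
  refine Matrix.ext fun i j => ?_
  fin_cases i <;> fin_cases j <;>
    simp [bMat, Matrix.mul_apply, Fin.sum_univ_four, Matrix.single] <;>
    first
      | exact neg_one_mul u
      | exact mul_neg_one u

open Matrix in
lemma B2 (u : E) : (single 0 1 u + single 1 0 u) * bMat 0 2 =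
    single 1 2 u := by
  refine Matrix.ext fun i j => ?_
  fin_cases i <;> fin_cases j <;>
    simp [bMat, Matrix.mul_apply, Fin.sum_univ_four, Matrix.single] <;>
    first
      | exact neg_one_mul u
      | exact mul_neg_one u

open Matrix in
lemma B3 (a b : R) : single (1 : Fin 4) (2 : Fin 4) (mulE a) *
    (single (0 : Fin 4) (2 : Fin 4) (mulE b) +
      single (2 : Fin 4) (0 : Fin 4) (mulE b)) =
    single (1 : Fin 4) (0 : Fin 4) (mulE (a * b)) := by
  refine Matrix.ext fun i j => ?_
  fin_cases i <;> fin_cases j <;>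
    simp [bMat, Matrix.mul_apply, Fin.sum_univ_four, Matrix.single, mulE_mul,
      mul_comm a b] <;>
    first
      | exact (mul_neg (mulE a) (mulE b)).trans (congrArg Neg.neg (mulE_mul a b))
      | exact (mul_neg (mulE b) (mulE a)).trans (congrArg Neg.neg (mulE_mul b a))
      | exact (neg_mul (mulE a) (mulE b)).trans (congrArg Neg.neg (mulE_mul a b))
      | exact (neg_mul (mulE b) (mulE a)).trans (congrArg Neg.neg (mulE_mul b a))
      | exact (mul_neg (mulE a) (mulE b)).trans (congrArg Neg.neg ((mulE_mul a b).trans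
          (congrArg mulE (mul_comm a b))))
      | exact (mul_neg (mulE b) (mulE a)).trans (congrArg Neg.neg ((mulE_mul b a).trans
          (congrArg mulE (mul_comm b a))))
      | exact (neg_mul (mulE a) (mulE b)).trans (congrArg Neg.neg ((mulE_mul a b).trans
          (congrArg mulE (mul_comm a b))))
      | exact (neg_mul (mulE b) (mulE a)).trans (congrArg Neg.neg ((mulE_mul b a).trans
          (congrArg mulE (mul_comm b a))))

open Matrix in
lemma B4 (a b : R) : (single (0 : Fin 4) (2 : Fin 4) (mulE b) +
      single (2 : Fin 4) (0 : Fin 4) (mulE b)) *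
    (-(single (2 : Fin 4) (1 : Fin 4) (mulE a))) =
    -(single (0 : Fin 4) (1 : Fin 4) (mulE (a * b))) := by
  refine Matrix.ext fun i j => ?_
  fin_cases i <;> fin_cases j <;>
    simp [bMat, Matrix.mul_apply, Fin.sum_univ_four, Matrix.single, mulE_mul,
      mul_comm a b] <;>
    first
      | exact (mul_neg (mulE a) (mulE b)).trans (congrArg Neg.neg (mulE_mul a b))
      | exact (mul_neg (mulE b) (mulE a)).trans (congrArg Neg.neg (mulE_mul b a))
      | exact (neg_mul (mulE a) (mulE b)).trans (congrArg Neg.neg (mulE_mul a b))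
      | exact (neg_mul (mulE b) (mulE a)).trans (congrArg Neg.neg (mulE_mul b a))
      | exact (mul_neg (mulE a) (mulE b)).trans (congrArg Neg.neg ((mulE_mul a b).trans
          (congrArg mulE (mul_comm a b))))
      | exact (mul_neg (mulE b) (mulE a)).trans (congrArg Neg.neg ((mulE_mul b a).trans
          (congrArg mulE (mul_comm b a))))
      | exact (neg_mul (mulE a) (mulE b)).trans (congrArg Neg.neg ((mulE_mul a b).trans
          (congrArg mulE (mul_comm a b))))
      | exact (neg_mul (mulE b) (mulE a)).trans (congrArg Neg.neg ((mulE_mul b a).trans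
          (congrArg mulE (mul_comm b a))))

open Matrix in
lemma B5 (u : E) : bMat 0 1 * (single 0 1 u + single 1 0 u) =
    single 0 0 u - single 1 1 u := by
  refine Matrix.ext fun i j => ?_
  fin_cases i <;> fin_cases j <;>
    simp [bMat, Matrix.mul_apply, Fin.sum_univ_four, Matrix.single] <;>
    first
      | exact neg_one_mul u
      | exact mul_neg_one u

open Matrix in
lemma B6 (u : E) : (single 0 1 u + single 1 0 u) * bMat 0 1 =
    single 1 1 u - single 0 0 u := by
  refine Matrix.ext fun i j => ?_
  fin_cases i <;> fin_cases j <;>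
    simp [bMat, Matrix.mul_apply, Fin.sum_univ_four, Matrix.single] <;>
    first
      | exact neg_one_mul u
      | exact mul_neg_one u

open Matrix in
lemma L1 (a : R) : qP 0 2 * qM 0 1 a + qM 0 1 a * qP 0 2 =
    fromBlocks (-(single 2 1 (mulE a))) 0 0 (single 1 2 (mulE a)) := by
  simp only [qP, qM, Matrix.fromBlocks_multiply, Matrix.fromBlocks_add,
    Matrix.mul_zero, Matrix.zero_mul, add_zero, zero_add, B1, B2]

open Matrix in
lemma L2 (a b : R) :
    fromBlocks (-(single 2 1 (mulE a))) 0 0 (single 1 2 (mulE a)) * qM 0 2 b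
    - qM 0 2 b * fromBlocks (-(single 2 1 (mulE a))) 0 0 (single 1 2 (mulE a))
    = qM 0 1 (a * b) := by
  simp only [qM, Matrix.fromBlocks_multiply, Matrix.mul_zero, Matrix.zero_mul,
    add_zero, zero_add, B3, B4, sub_eq_add_neg, Matrix.fromBlocks_neg, neg_zero, neg_neg,
    Matrix.fromBlocks_add,
    add_comm (single (1 : Fin 4) (0 : Fin 4) (mulE (a * b)))]

open Matrix in
lemma L3 (c : R) : qP 0 1 * qM 0 1 c + qM 0 1 c * qP 0 1 = hW 0 1 c := by
  simp only [qP, qM, hW, Matrix.fromBlocks_multiply, Matrix.fromBlocks_add,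
    Matrix.mul_zero, Matrix.zero_mul, add_zero, zero_add, B5, B6]

/-- `{q_{w₁+w₂}, [{q_{w₁+w₃}, q_{-w₁-w₂}(a)}, q_{-w₁-w₃}(b)]} = h_{w₁-w₂}(ab)`
(indices 0-based). -/
theorem stmt6 (a b : R) :
    qP 0 1 * ((qP 0 2 * qM 0 1 a + qM 0 1 a * qP 0 2) * qM 0 2 b
        - qM 0 2 b * (qP 0 2 * qM 0 1 a + qM 0 1 a * qP 0 2))
      + ((qP 0 2 * qM 0 1 a + qM 0 1 a * qP 0 2) * qM 0 2 b
        - qM 0 2 b * (qP 0 2 * qM 0 1 a + qM 0 1 a * qP 0 2)) * qP 0 1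
      = hW 0 1 (a * b) := by
  rw [L1, L2]
  exact L3 (a * b)

end
end
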